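/- Let n, p, k be integers with 1 ≤ k < p ≤ n and k ≤ n−p, let x ∈ Φ, and let c̲, d ∈ ℝ^n_{≥0} and Γ ≥ 0. Then the supremum over c ∈ U^c, α ∈ ℝ, β ≥ 0 of p·α + (p−k)·β − Σ_{i=1}^n [α + β·x_i − c_i]_+ (which equals max_{c ∈ U^c} min_{y ∈ Φ^k_x} Σ_i c_i·y_i) is attained at some triple (c, α, β) satisfying: β = 0, or α ∈ D, or α + β ∈ D, where D = {c̲_1,…,c̲_n} ∪ {c̲_1+d_1,…,c̲_n+d_n}. -/
import Mathlib


open Finset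

noncomputable section

/-- The set of feasible selections: 0-1 vectors with exactly `p` ones. -/
def selPhi (n p : ℕ) : Set (Fin n → ℝ) :=
  {x | (∀ i, x i = 0 ∨ x i = 1) ∧ (∑ i, x i) = (p : ℝ)}

/-- The recovery set `Φ^k_x`. -/
def selPhiK (n p k : ℕ) (x : Fin n → ℝ) : Set (Fin n → ℝ) :=
  {y | (∀ i, y i = 0 ∨ y i = 1) ∧ (∑ i, y i) = (p : ℝ) ∧
    (p : ℝ) - (k : ℝ) ≤ ∑ i, x i * y i}

/-- The continuous budgeted uncertainty set `U^c`. -/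
def Uc (n : ℕ) (cl d : Fin n → ℝ) (Γ : ℝ) : Set (Fin n → ℝ) :=
  {c | ∃ δ : Fin n → ℝ, (∀ i, 0 ≤ δ i ∧ δ i ≤ d i) ∧ (∑ i, δ i) ≤ Γ ∧
    c = fun i => cl i + δ i}

/-- The optimal value `min_{y ∈ S} Σ c_i y_i` of the incremental problem. -/
def incVal (n : ℕ) (S : Set (Fin n → ℝ)) (c : Fin n → ℝ) : ℝ :=
  sInf {v | ∃ y ∈ S, v = ∑ i, c i * y i}

/-- helper: `[a-δ]₊ ≥ [a]₊ - min(δ, min(d, [a]₊))`. -/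
lemma hmax1 (a δ dcap : ℝ) (h0 : 0 ≤ δ) (hδ : δ ≤ dcap) :
    max a 0 - min δ (min dcap (max a 0)) ≤ max (a - δ) 0 := by
  rcases le_total a 0 with h | h
  · rw [max_eq_right h]
    have h1 : min dcap 0 = 0 := min_eq_right (le_trans h0 hδ)
    rw [h1, min_eq_right h0]
    simpa using le_max_right (a - δ) 0
  · rw [max_eq_left h]
    rcases le_total δ a with h2 | h2
    · have hmin : min δ (min dcap a) = δ := min_eq_left (le_min hδ h2)
      rw [hmin]
      exact le_max_left _ _
    · have h3 : min dcap a = a := min_eq_right (le_trans h2 hδ)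
      rw [h3, min_eq_right h2]
      simpa using le_max_right (a - δ) 0

/-- helper: `[a-δ]₊ = [a]₊ - δ` when `0 ≤ δ ≤ [a]₊`. -/
lemma hmax2 (a δ : ℝ) (h0 : 0 ≤ δ) (h1 : δ ≤ max a 0) : max (a - δ) 0 = max a 0 - δ := by
  rcases le_total a 0 with h | h
  · have : max a 0 = 0 := max_eq_right h
    rw [this] at h1 ⊢
    have : δ = 0 := le_antisymm h1 h0
    simp [this, max_eq_right h]
  · rw [max_eq_left h] at h1 ⊢
    exact max_eq_left (by linarith)

/-- gap lemma for finite sets -/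
lemma gap_lemma (Df : Finset ℝ) (t : ℝ) (ht : ∀ a ∈ Df, a ≠ t) :
    ∃ η > 0, ∀ a ∈ Df, a < t - η ∨ t + η < a := by
  rcases Df.eq_empty_or_nonempty with h | h
  · exact ⟨1, by norm_num, by simp [h]⟩
  · have hne : (Df.image fun a => |a - t|).Nonempty := h.image _
    set m := (Df.image fun a => |a - t|).min' hne with hm
    have hmpos : 0 < m := by
      have := Finset.min'_mem _ hne
      rw [Finset.mem_image] at this
      obtain ⟨a, ha, hval⟩ := this
      rw [hm, ← hval]
      exact abs_pos.mpr (sub_ne_zero.mpr (ht a ha))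
    refine ⟨m / 2, by linarith, fun a ha => ?_⟩
    have hge : m ≤ |a - t| := Finset.min'_le _ _ (Finset.mem_image_of_mem _ ha)
    rcases abs_cases (a - t) with ⟨he, _⟩ | ⟨he, _⟩
    · right; linarith [he ▸ hge]
    · left
      have : -(a - t) ≥ m := by rw [← he]; exact hge
      linarith

/-- local affineness of `θ` and `σ` around a non-breakpoint. -/
lemma theta_sigma_local (cli di t e η : ℝ) (hdi : 0 ≤ di) (hη : 0 < η) (he : |e| ≤ η)
    (h1 : cli < t - η ∨ t + η < cli) (h2 : cli + di < t - η ∨ t + η < cli + di) :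
    max (t + e - cli) 0 = max (t - cli) 0 + (if cli < t then e else 0) ∧
    min di (max (t + e - cli) 0) = min di (max (t - cli) 0)
      + (if cli < t ∧ t < cli + di then e else 0) := by
  have hea : -η ≤ e ∧ e ≤ η := abs_le.mp he
  rcases h1 with h1 | h1
  · have hct : cli < t := by linarith
    have hpos : 0 ≤ t + e - cli := by linarith [hea.1]
    have hpos' : 0 ≤ t - cli := by linarith
    rw [max_eq_left hpos, max_eq_left hpos', if_pos hct]
    refine ⟨by ring, ?_⟩
    rcases h2 with h2 | h2
    · have hgt : ¬ t < cli + di := by linarith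
      rw [if_neg (by tauto)]
      rw [min_eq_left (by linarith [hea.1]), min_eq_left (by linarith)]
      ring
    · have hlt : t < cli + di := by linarith
      rw [if_pos ⟨hct, hlt⟩]
      rw [min_eq_right (by linarith [hea.2]), min_eq_right (by linarith)]
      ring
  · have hct : ¬ cli < t := by linarith
    have hneg : t + e - cli ≤ 0 := by linarith [hea.2]
    have hneg' : t - cli ≤ 0 := by linarith
    rw [max_eq_right hneg, max_eq_right hneg', if_neg hct]
    refine ⟨by ring, ?_⟩
    rw [if_neg (by tauto)]
    ring

def selXs {n : ℕ} (x : Fin n → ℝ) : Finset (Fin n) := univ.filter (fun i => x i = 1)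

def selInd {n : ℕ} (R : Finset (Fin n)) : Fin n → ℝ := fun i => if i ∈ R then 1 else 0

def selFam (n p k : ℕ) (x : Fin n → ℝ) : Finset (Finset (Fin n)) :=
  univ.filter (fun R => R.card = p ∧ p - k ≤ (R ∩ selXs x).card)

lemma mem_selFam {n p k : ℕ} {x : Fin n → ℝ} {R : Finset (Fin n)} :
    R ∈ selFam n p k x ↔ R.card = p ∧ p - k ≤ (R ∩ selXs x).card := by
  simp [selFam]

lemma sum_indicator {n : ℕ} (S : Finset (Fin n)) :
    ∑ i, (if i ∈ S then (1:ℝ) else 0) = S.card := by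
  rw [Finset.sum_boole]
  congr 1
  simp

lemma x_eq_ind {n : ℕ} {x : Fin n → ℝ} (hx01 : ∀ i, x i = 0 ∨ x i = 1) (i : Fin n) :
    x i = if i ∈ selXs x then (1:ℝ) else 0 := by
  rcases hx01 i with h | h <;> simp [selXs, h]

lemma xs_card {n p : ℕ} {x : Fin n → ℝ} (hx : x ∈ selPhi n p) : (selXs x).card = p := by
  have h1 : ∑ i, x i = ((selXs x).card : ℝ) := by
    rw [← sum_indicator (selXs x)]
    exact Finset.sum_congr rfl fun i _ => x_eq_ind hx.1 i
  have := hx.2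
  rw [h1] at this
  exact_mod_cast this

lemma sum_mul_ind {n : ℕ} (c : Fin n → ℝ) (R : Finset (Fin n)) :
    ∑ i, c i * selInd R i = ∑ i ∈ R, c i := by
  simp only [selInd, mul_ite, mul_one, mul_zero]
  rw [Finset.sum_ite_mem, Finset.univ_inter]

lemma sum_ind {n : ℕ} (R : Finset (Fin n)) : ∑ i, selInd R i = (R.card : ℝ) := by
  rw [← sum_indicator R]
  rfl

lemma sum_x_mul_ind {n : ℕ} {x : Fin n → ℝ} (hx01 : ∀ i, x i = 0 ∨ x i = 1)
    (R : Finset (Fin n)) : ∑ i, x i * selInd R i = ((R ∩ selXs x).card : ℝ) := by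
  rw [← sum_indicator (R ∩ selXs x)]
  refine Finset.sum_congr rfl fun i _ => ?_
  rcases hx01 i with h | h
  · have : i ∉ selXs x := by simp [selXs, h]
    simp [h, this]
  · have hm : i ∈ selXs x := by simp [selXs, h]
    by_cases hR : i ∈ R <;> simp [h, hm, hR, selInd]

lemma selPhiK_eq {n p k : ℕ} {x : Fin n → ℝ} (hk : k ≤ p) (hx : x ∈ selPhi n p) :
    selPhiK n p k x = selInd '' ↑(selFam n p k x) := by
  ext y
  constructor
  · rintro ⟨h01, hsum, hcons⟩
    set R := univ.filter (fun i => y i = 1) with hR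
    have hyind : y = selInd R := by
      funext i
      rcases h01 i with h | h <;> simp [selInd, hR, h]
    have hycard : R.card = p := by
      have : ∑ i, y i = (R.card : ℝ) := by
        rw [← sum_indicator R]
        refine Finset.sum_congr rfl fun i _ => ?_
        rcases h01 i with h | h <;> simp [hR, h]
      rw [hsum] at this
      exact_mod_cast this.symm
    have hcard2 : p - k ≤ (R ∩ selXs x).card := by
      have h2 : ∑ i, x i * y i = ((R ∩ selXs x).card : ℝ) := by
        rw [hyind]; exact sum_x_mul_ind hx.1 R
      rw [h2] at hcons
      have : ((p - k : ℕ) : ℝ) ≤ ((R ∩ selXs x).card : ℝ) := by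
        rw [Nat.cast_sub hk]; exact hcons
      exact_mod_cast this
    exact ⟨R, by simp [mem_selFam, hycard, hcard2], hyind.symm⟩
  · rintro ⟨R, hR, rfl⟩
    rw [Finset.mem_coe, mem_selFam] at hR
    refine ⟨fun i => ?_, ?_, ?_⟩
    · by_cases h : i ∈ R <;> simp [selInd, h]
    · rw [sum_ind, hR.1]
    · rw [sum_x_mul_ind hx.1 R]
      calc (p:ℝ) - k = ((p - k : ℕ) : ℝ) := by rw [Nat.cast_sub hk]
        _ ≤ _ := by exact_mod_cast hR.2

lemma selFam_nonempty {n p k : ℕ} {x : Fin n → ℝ} (hx : x ∈ selPhi n p) :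
    (selFam n p k x).Nonempty := by
  refine ⟨selXs x, ?_⟩
  rw [mem_selFam]
  refine ⟨xs_card hx, ?_⟩
  rw [Finset.inter_self]
  rw [xs_card hx]
  exact Nat.sub_le p k

lemma incVal_eq {n p k : ℕ} {x : Fin n → ℝ} (hk : k ≤ p) (hx : x ∈ selPhi n p)
    (c : Fin n → ℝ) :
    incVal n (selPhiK n p k x) c
      = (selFam n p k x).inf' (selFam_nonempty hx) (fun R => ∑ i ∈ R, c i) := by
  rw [incVal, Finset.inf'_eq_csInf_image]
  congr 1
  ext v
  constructor
  · rintro ⟨y, hy, rfl⟩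
    rw [selPhiK_eq hk hx] at hy
    obtain ⟨R, hR, rfl⟩ := hy
    exact ⟨R, hR, (sum_mul_ind c R).symm⟩
  · rintro ⟨R, hR, rfl⟩
    exact ⟨selInd R, by rw [selPhiK_eq hk hx]; exact ⟨R, hR, rfl⟩, (sum_mul_ind c R).symm⟩

section Dual
variable {n p k : ℕ} {x : Fin n → ℝ}

/-- Weak duality. -/
lemma weak_dual (hx : x ∈ selPhi n p) (hk : k ≤ p) (c : Fin n → ℝ) (α β : ℝ) (hβ : 0 ≤ β)
    {R : Finset (Fin n)} (hR : R ∈ selFam n p k x) :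
    (p:ℝ)*α + ((p:ℝ)-(k:ℝ))*β - ∑ i, max (α + β * x i - c i) 0 ≤ ∑ i ∈ R, c i := by
  rw [mem_selFam] at hR
  have key : ∑ i ∈ R, (α + β * x i - c i) ≤ ∑ i, max (α + β * x i - c i) 0 := by
    calc ∑ i ∈ R, (α + β * x i - c i) ≤ ∑ i ∈ R, max (α + β * x i - c i) 0 :=
          Finset.sum_le_sum fun i _ => le_max_left _ _
      _ ≤ ∑ i, max (α + β * x i - c i) 0 :=
          Finset.sum_le_sum_of_subset_of_nonneg (Finset.subset_univ R)
            (fun i _ _ => le_max_right _ _)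
  have hxR : ∑ i ∈ R, x i = ((R ∩ selXs x).card : ℝ) := by
    calc ∑ i ∈ R, x i = ∑ i ∈ R, (if i ∈ selXs x then (1:ℝ) else 0) :=
          Finset.sum_congr rfl fun i _ => x_eq_ind hx.1 i
      _ = ∑ _i ∈ R ∩ selXs x, (1:ℝ) := Finset.sum_ite_mem _ _ _
      _ = ((R ∩ selXs x).card : ℝ) := by simp
  have hsplit : ∑ i ∈ R, (α + β * x i - c i)
      = (R.card : ℝ) * α + β * ((R ∩ selXs x).card : ℝ) - ∑ i ∈ R, c i := by
    rw [Finset.sum_sub_distrib, Finset.sum_add_distrib, ← Finset.mul_sum,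
      Finset.sum_const, nsmul_eq_mul, hxR]
  have hge : (p:ℝ) - k ≤ ((R ∩ selXs x).card : ℝ) := by
    calc (p:ℝ) - k = ((p - k : ℕ) : ℝ) := by rw [Nat.cast_sub hk]
      _ ≤ _ := by exact_mod_cast hR.2
  have hcard : (R.card : ℝ) = p := by exact_mod_cast congrArg Nat.cast hR.1
  have hb : β * ((p:ℝ) - k) ≤ β * ((R ∩ selXs x).card : ℝ) :=
    mul_le_mul_of_nonneg_left hge hβ
  rw [hcard] at hsplit
  linarith [key, hsplit, hb]

/-- swap optimality: exchanging `i ∈ R` for `j ∉ R` in an optimal `R` can't improve. -/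
lemma swap_opt (c : Fin n → ℝ) {R : Finset (Fin n)} {i j : Fin n}
    (hp : 1 ≤ p) (hRc : R.card = p)
    (hopt : ∀ R' ∈ selFam n p k x, ∑ a ∈ R, c a ≤ ∑ a ∈ R', c a)
    (hi : i ∈ R) (hj : j ∉ R)
    (hfeas : p - k ≤ ((insert j (R.erase i)) ∩ selXs x).card) : c i ≤ c j := by
  have hjE : j ∉ R.erase i := fun h => hj (Finset.mem_of_mem_erase h)
  have hcard : (insert j (R.erase i)).card = p := by
    rw [Finset.card_insert_of_notMem hjE, Finset.card_erase_of_mem hi, hRc]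
    omega
  have hmem : insert j (R.erase i) ∈ selFam n p k x := by
    rw [mem_selFam]; exact ⟨hcard, hfeas⟩
  have hsum : ∑ a ∈ insert j (R.erase i), c a = ∑ a ∈ R, c a - c i + c j := by
    rw [Finset.sum_insert hjE, Finset.sum_erase_eq_sub hi]
    ring
  have := hopt _ hmem
  rw [hsum] at this
  linarith

/-- Strong duality: an explicit dual certificate at any cost vector. -/
lemma strong_dual (hk1 : 1 ≤ k) (hkp : k < p) (hx : x ∈ selPhi n p) (c : Fin n → ℝ) :
    ∃ α β : ℝ, 0 ≤ β ∧ incVal n (selPhiK n p k x) c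
      ≤ (p:ℝ)*α + ((p:ℝ)-(k:ℝ))*β - ∑ i, max (α + β * x i - c i) 0 := by
  have hk : k ≤ p := le_of_lt hkp
  have hp : 1 ≤ p := lt_of_le_of_lt hk1 hkp |>.le.trans (le_refl p) |>.trans (le_refl p)
  obtain ⟨R0, hR0mem, hR0val⟩ :=
    Finset.exists_mem_eq_inf' (selFam_nonempty hx) (fun R => ∑ i ∈ R, c i)
  have hIV : incVal n (selPhiK n p k x) c = ∑ i ∈ R0, c i := by
    rw [incVal_eq hk hx]; exact hR0val
  have hopt0 : ∀ R' ∈ selFam n p k x, ∑ a ∈ R0, c a ≤ ∑ a ∈ R', c a := by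
    intro R' hR'
    rw [← hR0val]
    exact Finset.inf'_le _ hR'
  by_cases hcase : ∃ R' ∈ selFam n p k x,
      (∑ i ∈ R', c i) = (∑ i ∈ R0, c i) ∧ p - k + 1 ≤ (R' ∩ selXs x).card
  -- CASE 1 : some optimal solution has slack in the recovery constraint; β = 0 works.
  · obtain ⟨R, hRmem, hRval, hRslack⟩ := hcase
    have hRc : R.card = p := (mem_selFam.mp hRmem).1
    have hopt : ∀ R' ∈ selFam n p k x, ∑ a ∈ R, c a ≤ ∑ a ∈ R', c a := by
      intro R' hR'; rw [hRval]; exact hopt0 R' hR'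
    have hRne : R.Nonempty := Finset.card_pos.mp (by omega)
    have hRine : (R.image c).Nonempty := hRne.image c
    set α := (R.image c).max' hRine with hα
    obtain ⟨i0, hi0, hi0v⟩ : ∃ i0 ∈ R, c i0 = α := by
      have := Finset.max'_mem _ hRine
      rw [Finset.mem_image] at this
      obtain ⟨i0, h1, h2⟩ := this
      exact ⟨i0, h1, h2⟩
    have hub : ∀ i ∈ R, c i ≤ α := fun i h =>
      Finset.le_max' _ _ (Finset.mem_image_of_mem c h)
    have hlb : ∀ j, j ∉ R → α ≤ c j := by
      intro j hj
      rw [← hi0v]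
      refine swap_opt c hp hRc hopt hi0 hj ?_
      have hsub : (R ∩ selXs x).erase i0 ⊆ (insert j (R.erase i0)) ∩ selXs x := by
        intro a ha
        have h1 := Finset.mem_of_mem_erase ha
        have hne := Finset.ne_of_mem_erase ha
        rw [Finset.mem_inter] at h1 ⊢
        exact ⟨Finset.mem_insert_of_mem (Finset.mem_erase.mpr ⟨hne, h1.1⟩), h1.2⟩
      have h2 := Finset.card_le_card hsub
      have h3 : (R ∩ selXs x).card - 1 ≤ ((R ∩ selXs x).erase i0).card :=
        Finset.pred_card_le_card_erase
      omega
    refine ⟨α, 0, le_refl 0, ?_⟩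
    have hterm : ∀ i, max (α + 0 * x i - c i) 0
        = if i ∈ R then α - c i else 0 := by
      intro i
      rw [zero_mul, add_zero]
      by_cases h : i ∈ R
      · rw [if_pos h]; exact max_eq_left (by linarith [hub i h])
      · rw [if_neg h]; exact max_eq_right (by linarith [hlb i h])
    have hsum : ∑ i, max (α + 0 * x i - c i) 0 = (p:ℝ) * α - ∑ i ∈ R, c i := by
      rw [Finset.sum_congr rfl fun i _ => hterm i, Finset.sum_ite_mem, Finset.univ_inter,
        Finset.sum_sub_distrib, Finset.sum_const, nsmul_eq_mul, hRc]
    rw [hsum, hIV, ← hRval]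
    linarith
  -- CASE 2 : every optimal solution is tight.
  · push_neg at hcase
    have hRtight : (R0 ∩ selXs x).card = p - k := by
      have h1 := (mem_selFam.mp hR0mem).2
      have h2 := hcase R0 hR0mem rfl
      omega
    have hRc : R0.card = p := (mem_selFam.mp hR0mem).1
    set A := R0 \ selXs x with hA
    set B := R0 ∩ selXs x with hB
    have hABcard : B.card + A.card = p := by
      rw [hA, hB, Finset.card_inter_add_card_sdiff, hRc]
    have hAcard : A.card = k := by omega
    have hBcard : B.card = p - k := by omega
    have hAne : A.Nonempty := Finset.card_pos.mp (by omega)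
    have hBne : B.Nonempty := Finset.card_pos.mp (by omega)
    set α := (A.image c).max' (hAne.image c) with hαdef
    set w := (B.image c).max' (hBne.image c) with hwdef
    set v := max α w with hvdef
    obtain ⟨iA, hiA, hiAv⟩ : ∃ i ∈ A, c i = α := by
      have := Finset.max'_mem _ (hAne.image c)
      rw [Finset.mem_image] at this; exact this
    obtain ⟨iB, hiB, hiBv⟩ : ∃ i ∈ B, c i = w := by
      have := Finset.max'_mem _ (hBne.image c)
      rw [Finset.mem_image] at this; exact this
    have hubA : ∀ i ∈ A, c i ≤ α := fun i h =>
      Finset.le_max' _ _ (Finset.mem_image_of_mem c h)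
    have hubB : ∀ i ∈ B, c i ≤ w := fun i h =>
      Finset.le_max' _ _ (Finset.mem_image_of_mem c h)
    have hiAR : iA ∈ R0 := (Finset.mem_sdiff.mp hiA).1
    have hiAX : iA ∉ selXs x := (Finset.mem_sdiff.mp hiA).2
    have hiBR : iB ∈ R0 := (Finset.mem_inter.mp hiB).1
    have hiBX : iB ∈ selXs x := (Finset.mem_inter.mp hiB).2
    -- exchange: removing iA (not in Xs) keeps the intersection
    have hfeasA : ∀ j, j ∉ R0 → p - k ≤ ((insert j (R0.erase iA)) ∩ selXs x).card := by
      intro j hj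
      have htight : (R0 ∩ selXs x).card = p - k := hRtight
      have hsub : R0 ∩ selXs x ⊆ (insert j (R0.erase iA)) ∩ selXs x := by
        intro a ha
        rw [Finset.mem_inter] at ha ⊢
        have hane : a ≠ iA := fun h => hiAX (h ▸ ha.2)
        exact ⟨Finset.mem_insert_of_mem (Finset.mem_erase.mpr ⟨hane, ha.1⟩), ha.2⟩
      have := Finset.card_le_card hsub
      omega
    have hαle : ∀ j, j ∉ R0 → α ≤ c j := by
      intro j hj
      rw [← hiAv]
      exact swap_opt c hp hRc hopt0 hiAR hj (hfeasA j hj)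
    have hwle : ∀ j, j ∈ selXs x → j ∉ R0 → w ≤ c j := by
      intro j hjX hj
      have htight : (R0 ∩ selXs x).card = p - k := hRtight
      rw [← hiBv]
      refine swap_opt c hp hRc hopt0 hiBR hj ?_
      have hjE : j ∉ (R0 ∩ selXs x).erase iB := by
        intro h; exact hj (Finset.mem_inter.mp (Finset.mem_of_mem_erase h)).1
      have hsub : insert j ((R0 ∩ selXs x).erase iB) ⊆ (insert j (R0.erase iB)) ∩ selXs x := by
        intro a ha
        rcases Finset.mem_insert.mp ha with rfl | ha
        · exact Finset.mem_inter.mpr ⟨Finset.mem_insert_self _ _, hjX⟩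
        · have h1 := Finset.mem_of_mem_erase ha
          have hne := Finset.ne_of_mem_erase ha
          rw [Finset.mem_inter] at h1 ⊢
          exact ⟨Finset.mem_insert_of_mem (Finset.mem_erase.mpr ⟨hne, h1.1⟩), h1.2⟩
      have h2 := Finset.card_le_card hsub
      have h3 : (insert j ((R0 ∩ selXs x).erase iB)).card
          = ((R0 ∩ selXs x).erase iB).card + 1 := Finset.card_insert_of_notMem hjE
      have h4 : ((R0 ∩ selXs x).erase iB).card = (R0 ∩ selXs x).card - 1 :=
        Finset.card_erase_of_mem hiB
      omega
    refine ⟨α, v - α, by simp [hvdef], ?_⟩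
    have hterm : ∀ i, max (α + (v - α) * x i - c i) 0
        = (if i ∈ B then v - c i else 0) + (if i ∈ A then α - c i else 0) := by
      intro i
      rcases hx.1 i with h | h
      · have hiX : i ∉ selXs x := by simp [selXs, h]
        have hiB' : i ∉ B := fun hm => hiX (Finset.mem_inter.mp hm).2
        rw [h, mul_zero, add_zero, if_neg hiB']
        by_cases hiA' : i ∈ A
        · rw [if_pos hiA']
          rw [max_eq_left (by linarith [hubA i hiA'])]
          ring
        · rw [if_neg hiA']
          have hiR : i ∉ R0 := fun hm => hiA' (Finset.mem_sdiff.mpr ⟨hm, hiX⟩)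
          rw [max_eq_right (by linarith [hαle i hiR])]
          ring
      · have hiX : i ∈ selXs x := by simp [selXs, h]
        have hiA' : i ∉ A := fun hm => (Finset.mem_sdiff.mp hm).2 hiX
        rw [h, if_neg hiA']
        by_cases hiB' : i ∈ B
        · rw [if_pos hiB']
          have : c i ≤ v := le_trans (hubB i hiB') (le_max_right α w)
          have hsimp : α + (v - α) * 1 - c i = v - c i := by ring
          rw [hsimp, max_eq_left (by linarith)]
          ring
        · rw [if_neg hiB']
          have hiR : i ∉ R0 := fun hm => hiB' (Finset.mem_inter.mpr ⟨hm, hiX⟩)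
          have h1 := hαle i hiR
          have h2 := hwle i hiX hiR
          have : v ≤ c i := max_le h1 h2
          rw [max_eq_right (by linarith)]
          ring
    have hsum : ∑ i, max (α + (v - α) * x i - c i) 0
        = ((B.card : ℝ) * v - ∑ i ∈ B, c i) + ((A.card : ℝ) * α - ∑ i ∈ A, c i) := by
      rw [Finset.sum_congr rfl fun i _ => hterm i, Finset.sum_add_distrib,
        Finset.sum_ite_mem, Finset.univ_inter, Finset.sum_ite_mem, Finset.univ_inter,
        Finset.sum_sub_distrib, Finset.sum_sub_distrib, Finset.sum_const, Finset.sum_const,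
        nsmul_eq_mul, nsmul_eq_mul]
    have hsumR : ∑ i ∈ B, c i + ∑ i ∈ A, c i = ∑ i ∈ R0, c i := by
      rw [hA, hB]
      exact Finset.sum_inter_add_sum_sdiff R0 (selXs x) c
    have hBcast : (B.card : ℝ) = (p:ℝ) - k := by
      rw [hBcard, Nat.cast_sub hk]
    have hAcast : (A.card : ℝ) = (k:ℝ) := by exact_mod_cast congrArg Nat.cast hAcard
    rw [hsum, hIV, hBcast, hAcast]
    nlinarith [hsumR]

end Dual

section Landscape
variable {n p k : ℕ} {x cl d : Fin n → ℝ} {Γ : ℝ}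

/-- the thresholds `α + β xᵢ` as a function of `u = α`, `v = α + β`. -/
def selTau (x : Fin n → ℝ) (u v : ℝ) : Fin n → ℝ := fun i => u + (v - u) * x i

/-- the reduced adversarial landscape function. -/
def selF (p k : ℕ) (x cl d : Fin n → ℝ) (Γ : ℝ) (u v : ℝ) : ℝ :=
  (k:ℝ) * u + ((p:ℝ) - (k:ℝ)) * v - (∑ i, max (selTau x u v i - cl i) 0)
    + min Γ (∑ i, min (d i) (max (selTau x u v i - cl i) 0))

lemma selF_ub (hd : ∀ i, 0 ≤ d i) {c : Fin n → ℝ} (hc : c ∈ Uc n cl d Γ) (u v : ℝ) :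
    (p:ℝ)*u + ((p:ℝ)-(k:ℝ))*(v-u) - ∑ i, max (u + (v-u) * x i - c i) 0
      ≤ selF p k x cl d Γ u v := by
  obtain ⟨δ, hδ, hδΓ, rfl⟩ := hc
  have hterm : ∀ i, max (selTau x u v i - cl i) 0
      - min (δ i) (min (d i) (max (selTau x u v i - cl i) 0))
      ≤ max (u + (v-u) * x i - (cl i + δ i)) 0 := by
    intro i
    have h1 : u + (v-u) * x i - (cl i + δ i) = (selTau x u v i - cl i) - δ i := by
      simp [selTau]; ring
    rw [h1]
    exact hmax1 _ _ _ (hδ i).1 (hδ i).2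
  have hsum : ∑ i, max (selTau x u v i - cl i) 0
      - ∑ i, min (δ i) (min (d i) (max (selTau x u v i - cl i) 0))
      ≤ ∑ i, max (u + (v-u) * x i - (cl i + δ i)) 0 := by
    rw [← Finset.sum_sub_distrib]
    exact Finset.sum_le_sum fun i _ => hterm i
  have hε1 : ∑ i, min (δ i) (min (d i) (max (selTau x u v i - cl i) 0)) ≤ Γ :=
    le_trans (Finset.sum_le_sum fun i _ => min_le_left _ _) hδΓ
  have hε2 : ∑ i, min (δ i) (min (d i) (max (selTau x u v i - cl i) 0))
      ≤ ∑ i, min (d i) (max (selTau x u v i - cl i) 0) :=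
    Finset.sum_le_sum fun i _ => min_le_right _ _
  have hεm : ∑ i, min (δ i) (min (d i) (max (selTau x u v i - cl i) 0))
      ≤ min Γ (∑ i, min (d i) (max (selTau x u v i - cl i) 0)) := le_min hε1 hε2
  rw [selF]
  have hlin : (p:ℝ)*u + ((p:ℝ)-(k:ℝ))*(v-u) = (k:ℝ)*u + ((p:ℝ)-(k:ℝ))*v := by ring
  linarith [hsum, hεm, hlin]

lemma selF_attain (hd : ∀ i, 0 ≤ d i) (hΓ : 0 ≤ Γ) (u v : ℝ) :
    ∃ c ∈ Uc n cl d Γ,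
      (p:ℝ)*u + ((p:ℝ)-(k:ℝ))*(v-u) - ∑ i, max (u + (v-u) * x i - c i) 0
        = selF p k x cl d Γ u v := by
  set w : Fin n → ℝ := fun i => min (d i) (max (selTau x u v i - cl i) 0) with hw
  have hw0 : ∀ i, 0 ≤ w i := fun i => le_min (hd i) (le_max_right _ _)
  set W := ∑ i, w i with hW
  have hW0 : 0 ≤ W := Finset.sum_nonneg fun i _ => hw0 i
  by_cases hcase : W ≤ Γ
  · refine ⟨fun i => cl i + w i, ⟨w, fun i => ⟨hw0 i, min_le_left _ _⟩, hcase, rfl⟩, ?_⟩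
    have hterm : ∀ i, max (u + (v-u) * x i - (cl i + w i)) 0
        = max (selTau x u v i - cl i) 0 - w i := by
      intro i
      have h1 : u + (v-u) * x i - (cl i + w i) = (selTau x u v i - cl i) - w i := by
        simp [selTau]; ring
      rw [h1]
      exact hmax2 _ _ (hw0 i) (min_le_right _ _)
    have hsum : ∑ i, max (u + (v-u) * x i - (cl i + w i)) 0
        = ∑ i, max (selTau x u v i - cl i) 0 - W := by
      rw [hW, ← Finset.sum_sub_distrib]
      exact Finset.sum_congr rfl fun i _ => hterm i
    have hmin : min Γ W = W := min_eq_right hcase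
    rw [selF]
    rw [hsum, ← hW, hmin]
    ring
  · push_neg at hcase
    have hWpos : 0 < W := lt_of_le_of_lt hΓ hcase
    set θ := Γ / W with hθ
    have hθ0 : 0 ≤ θ := div_nonneg hΓ hW0
    have hθ1 : θ ≤ 1 := by
      rw [hθ, div_le_one hWpos]
      exact le_of_lt hcase
    refine ⟨fun i => cl i + θ * w i, ⟨fun i => θ * w i,
      fun i => ⟨mul_nonneg hθ0 (hw0 i),
        le_trans (by nlinarith [hw0 i, hθ1] : θ * w i ≤ w i) (min_le_left _ _)⟩, ?_, rfl⟩, ?_⟩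
    · rw [← Finset.mul_sum, ← hW, hθ, div_mul_cancel₀ _ (ne_of_gt hWpos)]
    · have hterm : ∀ i, max (u + (v-u) * x i - (cl i + θ * w i)) 0
          = max (selTau x u v i - cl i) 0 - θ * w i := by
        intro i
        have h1 : u + (v-u) * x i - (cl i + θ * w i) = (selTau x u v i - cl i) - θ * w i := by
          simp [selTau]; ring
        rw [h1]
        refine hmax2 _ _ (mul_nonneg hθ0 (hw0 i)) ?_
        calc θ * w i ≤ w i := by nlinarith [hw0 i, hθ1]
          _ ≤ _ := min_le_right _ _
      have hsum : ∑ i, max (u + (v-u) * x i - (cl i + θ * w i)) 0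
          = ∑ i, max (selTau x u v i - cl i) 0 - Γ := by
        rw [Finset.sum_congr rfl fun i _ => hterm i]
        rw [Finset.sum_sub_distrib, ← Finset.mul_sum, ← hW, hθ,
          div_mul_cancel₀ _ (ne_of_gt hWpos)]
      have hmin : min Γ W = Γ := min_eq_left (le_of_lt hcase)
      rw [selF, hsum, ← hW, hmin]
      ring

end Landscape

section Clamp
variable {n p k : ℕ} {x cl d : Fin n → ℝ} {Γ : ℝ}

lemma sum_one_sub_x (hx : x ∈ selPhi n p) : ∑ i, (1 - x i) = (n:ℝ) - p := by
  rw [Finset.sum_sub_distrib, Finset.sum_const, Finset.card_univ, Fintype.card_fin,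
    nsmul_eq_mul, mul_one, hx.2]

lemma selF_top_v (hx : x ∈ selPhi n p) (hd : ∀ i, 0 ≤ d i)
    {H : ℝ} (hH : ∀ i, cl i + d i ≤ H) {u v : ℝ} (hv : H ≤ v) :
    selF p k x cl d Γ u v ≤ selF p k x cl d Γ u H := by
  have hterm : ∀ i, max (selTau x u v i - cl i) 0
      = max (selTau x u H i - cl i) 0 + x i * (v - H) := by
    intro i
    rcases hx.1 i with h | h
    · simp [selTau, h]
    · have e1 : selTau x u v i - cl i = v - cl i := by simp only [selTau, h]; ring
      have e2 : selTau x u H i - cl i = H - cl i := by simp only [selTau, h]; ring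
      rw [e1, e2, h, one_mul]
      have hdi := hd i
      have h1 := hH i
      rw [max_eq_left (by linarith), max_eq_left (by linarith)]
      ring
  have hΘ : ∑ i, max (selTau x u v i - cl i) 0
      = (∑ i, max (selTau x u H i - cl i) 0) + (p:ℝ) * (v - H) := by
    rw [Finset.sum_congr rfl fun i _ => hterm i, Finset.sum_add_distrib,
      ← Finset.sum_mul, hx.2]
  have hS : ∀ i, min (d i) (max (selTau x u v i - cl i) 0)
      = min (d i) (max (selTau x u H i - cl i) 0) := by
    intro i
    rcases hx.1 i with h | h
    · simp [selTau, h]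
    · have e1 : selTau x u v i - cl i = v - cl i := by simp only [selTau, h]; ring
      have e2 : selTau x u H i - cl i = H - cl i := by simp only [selTau, h]; ring
      have hdi := hd i
      have h1 := hH i
      rw [e1, e2, max_eq_left (by linarith), max_eq_left (by linarith),
        min_eq_left (by linarith), min_eq_left (by linarith)]
  have hmono := mul_nonneg (Nat.cast_nonneg (α := ℝ) k) (sub_nonneg.mpr hv)
  rw [selF, selF, hΘ, Finset.sum_congr rfl fun i _ => hS i]
  linarith

lemma selF_top_u (hx : x ∈ selPhi n p) (hd : ∀ i, 0 ≤ d i) (hkn : k + p ≤ n)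
    {H : ℝ} (hH : ∀ i, cl i + d i ≤ H) {u v : ℝ} (hu : H ≤ u) :
    selF p k x cl d Γ u v ≤ selF p k x cl d Γ H v := by
  have hterm : ∀ i, max (selTau x u v i - cl i) 0
      = max (selTau x H v i - cl i) 0 + (1 - x i) * (u - H) := by
    intro i
    rcases hx.1 i with h | h
    · have e1 : selTau x u v i - cl i = u - cl i := by simp only [selTau, h]; ring
      have e2 : selTau x H v i - cl i = H - cl i := by simp only [selTau, h]; ring
      have hdi := hd i
      have h1 := hH i
      rw [e1, e2, h, max_eq_left (by linarith), max_eq_left (by linarith)]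
      ring
    · have e1 : selTau x u v i - cl i = v - cl i := by simp only [selTau, h]; ring
      have e2 : selTau x H v i - cl i = v - cl i := by simp only [selTau, h]; ring
      rw [e1, e2, h]
      ring
  have hΘ : ∑ i, max (selTau x u v i - cl i) 0
      = (∑ i, max (selTau x H v i - cl i) 0) + ((n:ℝ) - p) * (u - H) := by
    rw [Finset.sum_congr rfl fun i _ => hterm i, Finset.sum_add_distrib,
      ← Finset.sum_mul, sum_one_sub_x hx]
  have hS : ∀ i, min (d i) (max (selTau x u v i - cl i) 0)
      = min (d i) (max (selTau x H v i - cl i) 0) := by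
    intro i
    rcases hx.1 i with h | h
    · have e1 : selTau x u v i - cl i = u - cl i := by simp only [selTau, h]; ring
      have e2 : selTau x H v i - cl i = H - cl i := by simp only [selTau, h]; ring
      have hdi := hd i
      have h1 := hH i
      rw [e1, e2, max_eq_left (by linarith), max_eq_left (by linarith),
        min_eq_left (by linarith), min_eq_left (by linarith)]
    · have e1 : selTau x u v i - cl i = v - cl i := by simp only [selTau, h]; ring
      have e2 : selTau x H v i - cl i = v - cl i := by simp only [selTau, h]; ring
      rw [e1, e2]
  have hcast : (k:ℝ) + p ≤ n := by exact_mod_cast hkn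
  have hmono := mul_nonneg (by linarith : (0:ℝ) ≤ (n:ℝ) - p - k) (sub_nonneg.mpr hu)
  rw [selF, selF, hΘ, Finset.sum_congr rfl fun i _ => hS i]
  nlinarith

lemma selF_low_u (hx : x ∈ selPhi n p) (hd : ∀ i, 0 ≤ d i)
    {L : ℝ} (hL : ∀ i, L ≤ cl i) {u v : ℝ} (hu : u ≤ L) :
    selF p k x cl d Γ u v ≤ selF p k x cl d Γ L v := by
  have hterm : ∀ i, max (selTau x u v i - cl i) 0 = max (selTau x L v i - cl i) 0 := by
    intro i
    rcases hx.1 i with h | h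
    · have e1 : selTau x u v i - cl i = u - cl i := by simp only [selTau, h]; ring
      have e2 : selTau x L v i - cl i = L - cl i := by simp only [selTau, h]; ring
      have h1 := hL i
      rw [e1, e2, max_eq_right (by linarith), max_eq_right (by linarith)]
    · have e1 : selTau x u v i - cl i = v - cl i := by simp only [selTau, h]; ring
      have e2 : selTau x L v i - cl i = v - cl i := by simp only [selTau, h]; ring
      rw [e1, e2]
  have hmono := mul_nonneg (Nat.cast_nonneg (α := ℝ) k) (sub_nonneg.mpr hu)
  rw [selF, selF, Finset.sum_congr rfl fun i _ => hterm i]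
  simp only [hterm]
  linarith [mul_nonneg (Nat.cast_nonneg (α := ℝ) k) (sub_nonneg.mpr hu)]

lemma selF_low_both (hx : x ∈ selPhi n p) (hd : ∀ i, 0 ≤ d i) (hkp : k ≤ p)
    {L : ℝ} (hL : ∀ i, L ≤ cl i) {u v : ℝ} (huv : u ≤ v) (hv : v ≤ L) :
    selF p k x cl d Γ u v ≤ selF p k x cl d Γ L L := by
  have hterm : ∀ i, max (selTau x u v i - cl i) 0 = max (selTau x L L i - cl i) 0 := by
    intro i
    have h1 := hL i
    rcases hx.1 i with h | h
    · have e1 : selTau x u v i - cl i = u - cl i := by simp only [selTau, h]; ring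
      have e2 : selTau x L L i - cl i = L - cl i := by simp only [selTau, h]; ring
      rw [e1, e2, max_eq_right (by linarith), max_eq_right (by linarith)]
    · have e1 : selTau x u v i - cl i = v - cl i := by simp only [selTau, h]; ring
      have e2 : selTau x L L i - cl i = L - cl i := by simp only [selTau, h]; ring
      rw [e1, e2, max_eq_right (by linarith), max_eq_right (by linarith)]
  have hkcast : (k:ℝ) ≤ p := by exact_mod_cast hkp
  have h1 := mul_nonneg (Nat.cast_nonneg (α := ℝ) k) (sub_nonneg.mpr (le_trans huv hv))
  have h2 := mul_nonneg (by linarith : (0:ℝ) ≤ (p:ℝ) - k) (sub_nonneg.mpr hv)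
  rw [selF, selF, Finset.sum_congr rfl fun i _ => hterm i]
  simp only [hterm]
  linarith

lemma selF_clamp (hx : x ∈ selPhi n p) (hd : ∀ i, 0 ≤ d i) (hkp : k ≤ p) (hkn : k + p ≤ n)
    {L H : ℝ} (hLH : L ≤ H) (hL : ∀ i, L ≤ cl i) (hH : ∀ i, cl i + d i ≤ H)
    {u v : ℝ} (huv : u ≤ v) :
    ∃ u' v', L ≤ u' ∧ u' ≤ v' ∧ v' ≤ H ∧
      selF p k x cl d Γ u v ≤ selF p k x cl d Γ u' v' := by
  by_cases hvH : v ≤ H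
  · -- no top clamping needed
    by_cases huL : L ≤ u
    · exact ⟨u, v, huL, huv, hvH, le_refl _⟩
    · push_neg at huL
      by_cases hvL : L ≤ v
      · exact ⟨L, v, le_refl _, hvL, hvH, selF_low_u hx hd hL huL.le⟩
      · push_neg at hvL
        exact ⟨L, L, le_refl _, le_refl _, hLH, selF_low_both hx hd hkp hL huv hvL.le⟩
  · push_neg at hvH
    by_cases huH : u ≤ H
    · -- clamp v down to H
      have h1 : selF p k x cl d Γ u v ≤ selF p k x cl d Γ u H :=
        selF_top_v hx hd hH hvH.le
      by_cases huL : L ≤ u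
      · exact ⟨u, H, huL, huH, le_refl _, h1⟩
      · push_neg at huL
        exact ⟨L, H, le_refl _, hLH, le_refl _,
          le_trans h1 (selF_low_u hx hd hL huL.le)⟩
    · push_neg at huH
      have h1 : selF p k x cl d Γ u v ≤ selF p k x cl d Γ H v :=
        selF_top_u hx hd hkn hH huH.le
      have h2 : selF p k x cl d Γ H v ≤ selF p k x cl d Γ H H :=
        selF_top_v hx hd hH hvH.le
      exact ⟨H, H, hLH, le_refl _, le_refl _, le_trans h1 h2⟩

end Clamp
section MaxSel
variable {n p k : ℕ} {x cl d : Fin n → ℝ} {Γ : ℝ}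

set_option maxHeartbeats 1600000 in
lemma selF_max (hx : x ∈ selPhi n p) (hd : ∀ i, 0 ≤ d i) (hΓ : 0 ≤ Γ)
    (hk1 : 1 ≤ k) (hkp : k < p) (hkn : k + p ≤ n) (hn : 0 < n) :
    ∃ u v : ℝ, u ≤ v ∧
      (∀ u' v', u' ≤ v' → selF p k x cl d Γ u' v' ≤ selF p k x cl d Γ u v) ∧
      (u = v ∨ (∃ i, cl i = u ∨ cl i + d i = u) ∨ (∃ i, cl i = v ∨ cl i + d i = v)) := by
  haveI : Nonempty (Fin n) := ⟨⟨0, hn⟩⟩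
  have hune : (univ : Finset (Fin n)).Nonempty := univ_nonempty
  set L : ℝ := (univ.image cl).min' (hune.image cl) - 1 with hLdef
  set H : ℝ := (univ.image (fun i => cl i + d i)).max' (hune.image _) + 1 with hHdef
  have hL : ∀ i, L ≤ cl i := fun i => by
    have := Finset.min'_le (univ.image cl) (cl i) (Finset.mem_image_of_mem cl (mem_univ i))
    simp only [hLdef]; linarith
  have hH : ∀ i, cl i + d i ≤ H := fun i => by
    have := Finset.le_max' (univ.image fun j => cl j + d j) (cl i + d i)
      (Finset.mem_image_of_mem _ (mem_univ i))
    simp only [hHdef]; linarith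
  have hLH : L ≤ H := by
    obtain ⟨i⟩ := ‹Nonempty (Fin n)›
    have h1 := hL i; have h2 := hH i; have h3 := hd i; linarith
  have hcont : Continuous (fun q : ℝ × ℝ => selF p k x cl d Γ q.1 q.2) := by
    simp only [selF, selTau]
    fun_prop
  set Fp : ℝ × ℝ → ℝ := fun q => selF p k x cl d Γ q.1 q.2 with hFp
  set K : Set (ℝ × ℝ) := (Set.Icc L H ×ˢ Set.Icc L H) ∩ {q | q.1 ≤ q.2} with hK
  have hKcomp : IsCompact K :=
    (isCompact_Icc.prod isCompact_Icc).inter_right (isClosed_le continuous_fst continuous_snd)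
  have hKne : K.Nonempty := ⟨(L, L), ⟨⟨⟨le_refl L, hLH⟩, ⟨le_refl L, hLH⟩⟩, le_refl L⟩⟩
  obtain ⟨z, hzK, hzmax⟩ := hKcomp.exists_isMaxOn hKne hcont.continuousOn
  have hglob : ∀ u' v', u' ≤ v' → selF p k x cl d Γ u' v' ≤ Fp z := by
    intro u' v' h
    obtain ⟨u2, v2, h1, h2, h3, h4⟩ := selF_clamp (Γ := Γ) hx hd (le_of_lt hkp) hkn hLH hL hH h
    have hmem : ((u2, v2) : ℝ × ℝ) ∈ K := ⟨⟨⟨h1, le_trans h2 h3⟩, ⟨le_trans h1 h2, h3⟩⟩, h2⟩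
    exact le_trans h4 (hzmax hmem)
  set K' : Set (ℝ × ℝ) := K ∩ Fp ⁻¹' {Fp z} with hK'
  have hK'comp : IsCompact K' := hKcomp.inter_right (isClosed_singleton.preimage hcont)
  have hK'ne : K'.Nonempty := ⟨z, hzK, rfl⟩
  obtain ⟨z1, hz1, hz1min⟩ := hK'comp.exists_isMinOn hK'ne continuous_snd.continuousOn
  set K'' : Set (ℝ × ℝ) := K' ∩ {q | q.2 = z1.2} with hK''
  have hK''comp : IsCompact K'' := hK'comp.inter_right (isClosed_eq continuous_snd continuous_const)
  obtain ⟨z2, hz2, hz2max⟩ := hK''comp.exists_isMaxOn ⟨z1, hz1, rfl⟩ continuous_fst.continuousOn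
  obtain ⟨⟨hz2K, hz2F⟩, hz2v⟩ := hz2
  set u : ℝ := z2.1 with hudef
  set v : ℝ := z2.2 with hvdef
  have hFz2 : Fp z2 = Fp z := hz2F
  have huv : u ≤ v := hz2K.2
  have huI : L ≤ u ∧ u ≤ H := ⟨(hz2K.1.1).1, (hz2K.1.1).2⟩
  have hvI : L ≤ v ∧ v ≤ H := ⟨(hz2K.1.2).1, (hz2K.1.2).2⟩
  have hM : selF p k x cl d Γ u v = Fp z := hFz2
  refine ⟨u, v, huv, ?_, ?_⟩
  · intro u' v' h
    exact le_trans (hglob u' v' h) (le_of_eq hM.symm)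
  by_contra hcon
  push_neg at hcon
  obtain ⟨hne, hu, hv⟩ := hcon
  have huv' : u < v := lt_of_le_of_ne huv hne
  -- gap around u and v
  set Dfin : Finset ℝ := (univ.image cl) ∪ (univ.image fun i => cl i + d i) with hDfin
  have hDu : ∀ a ∈ Dfin, a ≠ u := by
    intro a ha hau
    rcases Finset.mem_union.mp ha with h | h <;> obtain ⟨i, _, rfl⟩ := Finset.mem_image.mp h
    · exact (hu i).1 hau
    · exact (hu i).2 hau
  have hDv : ∀ a ∈ Dfin, a ≠ v := by
    intro a ha hav
    rcases Finset.mem_union.mp ha with h | h <;> obtain ⟨i, _, rfl⟩ := Finset.mem_image.mp h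
    · exact (hv i).1 hav
    · exact (hv i).2 hav
  obtain ⟨ηu, hηu0, hηu⟩ := gap_lemma Dfin u hDu
  obtain ⟨ηv, hηv0, hηv⟩ := gap_lemma Dfin v hDv
  set η : ℝ := min (min ηu ηv) ((v - u)/2) with hηdef
  have hη0 : 0 < η := lt_min (lt_min hηu0 hηv0) (by linarith)
  have hηvu : η < v - u := by
    have : η ≤ (v - u)/2 := min_le_right _ _
    linarith
  have hwinU : ∀ a ∈ Dfin, a < u - η ∨ u + η < a := by
    intro a ha
    have h1 : η ≤ ηu := le_trans (min_le_left _ _) (min_le_left _ _)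
    rcases hηu a ha with h | h
    · left; linarith
    · right; linarith
  have hwinV : ∀ a ∈ Dfin, a < v - η ∨ v + η < a := by
    intro a ha
    have h1 : η ≤ ηv := le_trans (min_le_left _ _) (min_le_right _ _)
    rcases hηv a ha with h | h
    · left; linarith
    · right; linarith
  have hclD : ∀ i, cl i ∈ Dfin := fun i =>
    Finset.mem_union_left _ (Finset.mem_image_of_mem cl (mem_univ i))
  have hcldD : ∀ i, cl i + d i ∈ Dfin := fun i =>
    Finset.mem_union_right _ (Finset.mem_image_of_mem _ (mem_univ i))
  -- local slopes
  set q0 : ℝ := ∑ i, (1 - x i) * (if cl i < u then 1 else 0) with hq0def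
  set q1 : ℝ := ∑ i, x i * (if cl i < v then 1 else 0) with hq1def
  set r0 : ℝ := ∑ i, (1 - x i) * (if cl i < u ∧ u < cl i + d i then 1 else 0) with hr0def
  set r1 : ℝ := ∑ i, x i * (if cl i < v ∧ v < cl i + d i then 1 else 0) with hr1def
  have hr0nn : 0 ≤ r0 := by
    rw [hr0def]
    refine Finset.sum_nonneg fun i _ => mul_nonneg ?_ (by positivity)
    rcases hx.1 i with h | h <;> simp [h]
  have hr1nn : 0 ≤ r1 := by
    rw [hr1def]
    refine Finset.sum_nonneg fun i _ => mul_nonneg ?_ (by positivity)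
    rcases hx.1 i with h | h <;> simp [h]
  set Θ : ℝ := ∑ i, max (selTau x u v i - cl i) 0 with hΘdef
  set S : ℝ := ∑ i, min (d i) (max (selTau x u v i - cl i) 0) with hSdef
  have hbase : selF p k x cl d Γ u v = (k:ℝ)*u + ((p:ℝ)-(k:ℝ))*v - Θ + min Γ S := by
    rw [hΘdef, hSdef]; rfl
  -- per-index shift identities
  have hshift : ∀ a b : ℝ, |a| ≤ η → |b| ≤ η → ∀ i,
      max (selTau x (u+a) (v+b) i - cl i) 0
        = max (selTau x u v i - cl i) 0
          + (a * ((1 - x i) * (if cl i < u then 1 else 0))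
             + b * (x i * (if cl i < v then 1 else 0)))
      ∧ min (d i) (max (selTau x (u+a) (v+b) i - cl i) 0)
        = min (d i) (max (selTau x u v i - cl i) 0)
          + (a * ((1 - x i) * (if cl i < u ∧ u < cl i + d i then 1 else 0))
             + b * (x i * (if cl i < v ∧ v < cl i + d i then 1 else 0))) := by
    intro a b ha hb i
    rcases hx.1 i with h | h
    · have ht : selTau x u v i = u := by simp only [selTau, h]; ring
      have ht' : selTau x (u+a) (v+b) i = u + a := by simp only [selTau, h]; ring
      have hloc := theta_sigma_local (cl i) (d i) u a η (hd i) hη0 ha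
        (hwinU _ (hclD i)) (hwinU _ (hcldD i))
      rw [ht, ht', h]
      constructor
      · rw [hloc.1]
        split_ifs with hc <;> ring
      · rw [hloc.2]
        split_ifs with hc <;> ring
    · have ht : selTau x u v i = v := by simp only [selTau, h]; ring
      have ht' : selTau x (u+a) (v+b) i = v + b := by simp only [selTau, h]; ring
      have hloc := theta_sigma_local (cl i) (d i) v b η (hd i) hη0 hb
        (hwinV _ (hclD i)) (hwinV _ (hcldD i))
      rw [ht, ht', h]
      constructor
      · rw [hloc.1]
        split_ifs with hc <;> ring
      · rw [hloc.2]
        split_ifs with hc <;> ring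
  have hFshift : ∀ a b : ℝ, |a| ≤ η → |b| ≤ η →
      selF p k x cl d Γ (u+a) (v+b)
        = (k:ℝ)*(u+a) + ((p:ℝ)-(k:ℝ))*(v+b) - (Θ + (a*q0 + b*q1))
          + min Γ (S + (a*r0 + b*r1)) := by
    intro a b ha hb
    have h1 : ∑ i, max (selTau x (u+a) (v+b) i - cl i) 0 = Θ + (a*q0 + b*q1) := by
      rw [Finset.sum_congr rfl fun i _ => (hshift a b ha hb i).1]
      rw [Finset.sum_add_distrib, Finset.sum_add_distrib, ← Finset.mul_sum, ← Finset.mul_sum,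
        hΘdef, hq0def, hq1def]
    have h2 : ∑ i, min (d i) (max (selTau x (u+a) (v+b) i - cl i) 0)
        = S + (a*r0 + b*r1) := by
      rw [Finset.sum_congr rfl fun i _ => (hshift a b ha hb i).2]
      rw [Finset.sum_add_distrib, Finset.sum_add_distrib, ← Finset.mul_sum, ← Finset.mul_sum,
        hSdef, hr0def, hr1def]
    rw [selF, h1, h2]
  -- the master optimality inequality in shifted coordinates
  have hop : ∀ a b : ℝ, |a| ≤ η → |b| ≤ η → u + a ≤ v + b →
      (k:ℝ)*a + ((p:ℝ)-(k:ℝ))*b - (a*q0 + b*q1)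
        + (min Γ (S + (a*r0 + b*r1)) - min Γ S) ≤ 0 := by
    intro a b ha hb hab
    have h1 := hglob (u+a) (v+b) hab
    rw [hFshift a b ha hb, ← hM, hbase] at h1
    linarith
  -- a shifted point achieving equality is a maximizer
  have hmaxmem : ∀ a b : ℝ, |a| ≤ η → |b| ≤ η → u + a ≤ v + b →
      L ≤ u + a → v + b ≤ H → u + a ≤ H → L ≤ v + b →
      0 ≤ (k:ℝ)*a + ((p:ℝ)-(k:ℝ))*b - (a*q0 + b*q1)
        + (min Γ (S + (a*r0 + b*r1)) - min Γ S) →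
      (u + a, v + b) ∈ K' := by
    intro a b ha hb hab hL1 hH2 hH1 hL2 hge
    have h1 : Fp z ≤ selF p k x cl d Γ (u+a) (v+b) := by
      rw [hFshift a b ha hb, ← hM, hbase]
      linarith
    have h2 := hglob (u+a) (v+b) hab
    refine ⟨⟨⟨⟨hL1, hH1⟩, ⟨hL2, hH2⟩⟩, hab⟩, ?_⟩
    exact le_antisymm h2 h1
  have habs0 : |(0:ℝ)| ≤ η := by simp [le_of_lt hη0]
  have habsη : |η| ≤ η := by rw [abs_of_pos hη0]
  have habsnη : |(-η)| ≤ η := by rw [abs_neg, abs_of_pos hη0]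
  -- contradiction helpers
  have hcontraV : ∀ a b : ℝ, b < 0 → (u + a, v + b) ∈ K' → False := by
    intro a b hb hmem
    have h1 : z1.2 ≤ v + b := hz1min hmem
    have h2 : z1.2 = v := hz2v.symm
    linarith
  have hcontraU : ∀ a b : ℝ, 0 < a → b = 0 → (u + a, v + b) ∈ K' → False := by
    intro a b ha hb hmem
    have hmem2 : (u + a, v + b) ∈ K'' := by
      refine ⟨hmem, ?_⟩
      show v + b = z1.2
      rw [hb, add_zero]
      exact hz2v
    have h1 : u + a ≤ z2.1 := hz2max hmem2
    rw [← hudef] at h1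
    linarith
  clear hshift hFshift hbase hglob hzmax hz1min hz2max hz2v hM hFz2 hudef hvdef
  clear hzK hz1 hz2K hz2F hne hu hv
  clear hwinU hwinV hclD hcldD hDu hDv hηu hηv hKne hK'ne hKcomp hK'comp hK''comp hcont
  clear hK hK' hK'' hFp hLdef hHdef hL hH hLH hDfin
  clear_value u v L H S Θ q0 q1 r0 r1 η K'
  clear hΘdef
  clear K'' K Fp Dfin z2 z1 z Θ
  rcases lt_trichotomy S Γ with hSΓ | hSΓ | hSΓ
  -- CASE A : S < Γ
  · set η1 : ℝ := min η ((Γ - S)/(r0+r1+1)) with hη1def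
    have hden : (0:ℝ) < r0 + r1 + 1 := by linarith
    have hη10 : 0 < η1 := lt_min hη0 (div_pos (by linarith) hden)
    have hη1η : η1 ≤ η := min_le_left _ _
    have hη1b : η1 * (r0 + r1 + 1) ≤ Γ - S := by
      have h1 : η1 ≤ (Γ - S)/(r0+r1+1) := min_le_right _ _
      calc η1 * (r0+r1+1) ≤ ((Γ - S)/(r0+r1+1)) * (r0+r1+1) :=
            mul_le_mul_of_nonneg_right h1 hden.le
        _ = Γ - S := div_mul_cancel₀ _ (ne_of_gt hden)
    have habs1 : |η1| ≤ η := by rw [abs_of_pos hη10]; exact hη1η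
    have habsn1 : |(-η1)| ≤ η := by rw [abs_neg, abs_of_pos hη10]; exact hη1η
    have hpr0 : 0 ≤ η1 * r0 := mul_nonneg hη10.le hr0nn
    have hpr1 : 0 ≤ η1 * r1 := mul_nonneg hη10.le hr1nn
    have hminS : min Γ S = S := min_eq_right (le_of_lt hSΓ)
    have hminup : min Γ (S + ((0:ℝ)*r0 + η1*r1)) = S + ((0:ℝ)*r0 + η1*r1) := by
      apply min_eq_right; nlinarith
    have hmindn : min Γ (S + ((0:ℝ)*r0 + (-η1)*r1)) = S + ((0:ℝ)*r0 + (-η1)*r1) := by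
      apply min_eq_right; nlinarith
    have hup := hop 0 η1 habs0 habs1 (by linarith)
    rw [hminup, hminS] at hup
    have hcoef : (p:ℝ) - (k:ℝ) - q1 + r1 ≤ 0 := by nlinarith
    have hgedn : 0 ≤ (k:ℝ)*0 + ((p:ℝ)-(k:ℝ))*(-η1) - (0*q0 + (-η1)*q1)
        + (min Γ (S + ((0:ℝ)*r0 + (-η1)*r1)) - min Γ S) := by
      rw [hmindn, hminS]; nlinarith
    have hmem := hmaxmem 0 (-η1) habs0 habsn1 (by linarith) (by linarith [huI.1])
      (by linarith [hvI.2]) (by linarith [huI.2]) (by linarith [huI.1]) hgedn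
    exact hcontraV 0 (-η1) (by linarith) hmem
  -- CASE C : S = Γ
  · have hminS : min Γ S = S := by rw [hSΓ, min_self]
    have hminD : ∀ Δ : ℝ, min Γ (S + Δ) = S + min 0 Δ := by
      intro Δ
      rcases le_total Δ 0 with h | h
      · rw [min_eq_right (by linarith), min_eq_right h]
      · rw [min_eq_left (by linarith), min_eq_left h]; linarith
    have hup := hop 0 η habs0 habsη (by linarith)
    rw [hminD, hminS] at hup
    have hm0 : min 0 ((0:ℝ)*r0 + η*r1) = 0 :=
      min_eq_left (by nlinarith [mul_nonneg hη0.le hr1nn])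
    rw [hm0] at hup
    have hq1 : (p:ℝ) - (k:ℝ) - q1 ≤ 0 := by nlinarith
    rcases le_or_gt r1 0 with hr1z | hr1pos
    · -- r1 = 0 : slide v down
      have hr1e : r1 = 0 := le_antisymm hr1z hr1nn
      have hgedn : 0 ≤ (k:ℝ)*0 + ((p:ℝ)-(k:ℝ))*(-η) - (0*q0 + (-η)*q1)
          + (min Γ (S + ((0:ℝ)*r0 + (-η)*r1)) - min Γ S) := by
        rw [hminD, hminS, hr1e]
        have : min 0 ((0:ℝ)*r0 + (-η)*0) = 0 := by norm_num
        rw [this]; nlinarith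
      have hmem := hmaxmem 0 (-η) habs0 habsnη (by linarith) (by linarith [huI.1])
        (by linarith [hvI.2]) (by linarith [huI.2]) (by linarith [huI.1]) hgedn
      exact hcontraV 0 (-η) (by linarith) hmem
    · have hupu := hop η 0 habsη habs0 (by linarith)
      rw [hminD, hminS] at hupu
      have hm1 : min 0 (η*r0 + (0:ℝ)*r1) = 0 :=
        min_eq_left (by nlinarith [mul_nonneg hη0.le hr0nn])
      rw [hm1] at hupu
      have hq0 : (k:ℝ) - q0 ≤ 0 := by nlinarith
      rcases le_or_gt r0 0 with hr0z | hr0pos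
      · -- r0 = 0 : slide u up
        have hr0e : r0 = 0 := le_antisymm hr0z hr0nn
        have hdnu := hop (-η) 0 habsnη habs0 (by linarith)
        rw [hminD, hminS, hr0e] at hdnu
        have hm2 : min 0 ((-η)*0 + (0:ℝ)*r1) = 0 := by norm_num
        rw [hm2] at hdnu
        have hq0' : 0 ≤ (k:ℝ) - q0 := by nlinarith
        have hgeu : 0 ≤ (k:ℝ)*η + ((p:ℝ)-(k:ℝ))*0 - (η*q0 + 0*q1)
            + (min Γ (S + (η*r0 + (0:ℝ)*r1)) - min Γ S) := by
          rw [hminD, hminS, hr0e]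
          have : min 0 (η*(0:ℝ) + (0:ℝ)*r1) = 0 := by norm_num
          rw [this]; nlinarith
        have hmem := hmaxmem η 0 habsη habs0 (by linarith) (by linarith [huI.1])
          (by linarith [hvI.2]) (by linarith [hvI.2]) (by linarith [hvI.1]) hgeu
        exact hcontraU η 0 hη0 rfl hmem
      · -- r0, r1 > 0 : slide along the budget boundary
        set ε : ℝ := η / (r0 + r1) with hεdef
        have hrr : (0:ℝ) < r0 + r1 := by linarith
        have hε0 : 0 < ε := div_pos hη0 hrr
        have hεr : ε * (r0 + r1) = η := div_mul_cancel₀ _ (ne_of_gt hrr)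
        have hεsum : ε*r1 + ε*r0 = η := by rw [← hεr]; ring
        have hεr1pos : 0 < ε*r1 := mul_pos hε0 hr1pos
        have hεr0pos : 0 < ε*r0 := mul_pos hε0 hr0pos
        have hεr1η : ε*r1 ≤ η := by linarith
        have hεr0η : ε*r0 ≤ η := by linarith
        have ha1 : |ε*r1| ≤ η := by
          rw [abs_of_nonneg hεr1pos.le]; linarith
        have hb1 : |(-(ε*r0))| ≤ η := by
          rw [abs_neg, abs_of_nonneg hεr0pos.le]; linarith
        have hΔ : (ε*r1)*r0 + (-(ε*r0))*r1 = 0 := by ring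
        have hΔ' : (-(ε*r1))*r0 + (ε*r0)*r1 = 0 := by ring
        have ha1' : |(-(ε*r1))| ≤ η := by rw [abs_neg]; exact ha1
        have hb1' : |ε*r0| ≤ η := by
          rw [abs_of_nonneg hεr0pos.le]; linarith
        have hup2 := hop (ε*r1) (-(ε*r0)) ha1 hb1 (by linarith)
        rw [hminD, hminS, hΔ] at hup2
        have hm3 : min (0:ℝ) 0 = 0 := min_self 0
        rw [hm3] at hup2
        have hdn2 := hop (-(ε*r1)) (ε*r0) ha1' hb1' (by linarith)
        rw [hminD, hminS, hΔ'] at hdn2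
        rw [hm3] at hdn2
        have hge2 : 0 ≤ (k:ℝ)*(ε*r1) + ((p:ℝ)-(k:ℝ))*(-(ε*r0)) - ((ε*r1)*q0 + (-(ε*r0))*q1)
            + (min Γ (S + ((ε*r1)*r0 + (-(ε*r0))*r1)) - min Γ S) := by
          rw [hminD, hminS, hΔ, hm3]; linarith
        have hmem := hmaxmem (ε*r1) (-(ε*r0)) ha1 hb1 (by linarith)
          (by linarith [huI.1]) (by linarith [hvI.2]) (by linarith [hvI.2, hηvu])
          (by linarith [huI.1, hηvu]) hge2
        exact hcontraV (ε*r1) (-(ε*r0)) (by linarith) hmem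
  -- CASE B : Γ < S
  · set η1 : ℝ := min η ((S - Γ)/(r0+r1+1)) with hη1def
    have hden : (0:ℝ) < r0 + r1 + 1 := by linarith
    have hη10 : 0 < η1 := lt_min hη0 (div_pos (by linarith) hden)
    have hη1η : η1 ≤ η := min_le_left _ _
    have hη1b : η1 * (r0 + r1 + 1) ≤ S - Γ := by
      have h1 : η1 ≤ (S - Γ)/(r0+r1+1) := min_le_right _ _
      calc η1 * (r0+r1+1) ≤ ((S - Γ)/(r0+r1+1)) * (r0+r1+1) :=
            mul_le_mul_of_nonneg_right h1 hden.le
        _ = S - Γ := div_mul_cancel₀ _ (ne_of_gt hden)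
    have habs1 : |η1| ≤ η := by rw [abs_of_pos hη10]; exact hη1η
    have habsn1 : |(-η1)| ≤ η := by rw [abs_neg, abs_of_pos hη10]; exact hη1η
    have hpr0 : 0 ≤ η1 * r0 := mul_nonneg hη10.le hr0nn
    have hpr1 : 0 ≤ η1 * r1 := mul_nonneg hη10.le hr1nn
    have hminS : min Γ S = Γ := min_eq_left (le_of_lt hSΓ)
    have hminup : min Γ (S + ((0:ℝ)*r0 + η1*r1)) = Γ := by
      apply min_eq_left; nlinarith
    have hmindn : min Γ (S + ((0:ℝ)*r0 + (-η1)*r1)) = Γ := by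
      apply min_eq_left; nlinarith
    have hup := hop 0 η1 habs0 habs1 (by linarith)
    rw [hminup, hminS] at hup
    have hcoef : (p:ℝ) - (k:ℝ) - q1 ≤ 0 := by nlinarith
    have hgedn : 0 ≤ (k:ℝ)*0 + ((p:ℝ)-(k:ℝ))*(-η1) - (0*q0 + (-η1)*q1)
        + (min Γ (S + ((0:ℝ)*r0 + (-η1)*r1)) - min Γ S) := by
      rw [hmindn, hminS]; nlinarith
    have hmem := hmaxmem 0 (-η1) habs0 habsn1 (by linarith) (by linarith [huI.1])
      (by linarith [hvI.2]) (by linarith [huI.2]) (by linarith [huI.1]) hgedn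
    exact hcontraV 0 (-η1) (by linarith) hmem


end MaxSel

/-- The supremum of the dual adversarial objective is attained at a triple with
`β = 0`, or `α ∈ D`, or `α + β ∈ D`, and equals the adversarial optimum. -/
theorem stmt3 (n p k : ℕ) (hk1 : 1 ≤ k) (hkp : k < p) (hpn : p ≤ n) (hknp : k ≤ n - p)
    (x : Fin n → ℝ) (hx : x ∈ selPhi n p)
    (cl d : Fin n → ℝ) (hcl : ∀ i, 0 ≤ cl i) (hd : ∀ i, 0 ≤ d i)
    (Γ : ℝ) (hΓ : 0 ≤ Γ) :
    let D : Set ℝ := Set.range cl ∪ Set.range (fun i => cl i + d i)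
    let g : (Fin n → ℝ) → ℝ → ℝ → ℝ := fun c α β =>
      (p : ℝ) * α + ((p : ℝ) - (k : ℝ)) * β - ∑ i, max (α + β * x i - c i) 0
    ∃ c ∈ Uc n cl d Γ, ∃ α β : ℝ, 0 ≤ β ∧
      (∀ c' ∈ Uc n cl d Γ, ∀ α' β' : ℝ, 0 ≤ β' → g c' α' β' ≤ g c α β) ∧
      IsGreatest {v | ∃ c' ∈ Uc n cl d Γ, v = incVal n (selPhiK n p k x) c'}
        (g c α β) ∧
      (β = 0 ∨ α ∈ D ∨ α + β ∈ D) := by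
  intro D g
  have hk : k ≤ p := hkp.le
  have hn0 : 0 < n := by omega
  have hknp' : k + p ≤ n := by omega
  obtain ⟨u, v, huv, hmax, hstruct⟩ :=
    selF_max (cl := cl) (d := d) (Γ := Γ) hx hd hΓ hk1 hkp hknp' hn0
  obtain ⟨c, hc, hceq⟩ := selF_attain (p := p) (k := k) (x := x) (cl := cl) hd hΓ u v
  -- every dual value is at most selF u v
  have hgub : ∀ c' ∈ Uc n cl d Γ, ∀ α' β' : ℝ, 0 ≤ β' →
      (p:ℝ)*α' + ((p:ℝ)-(k:ℝ))*β' - ∑ i, max (α' + β' * x i - c' i) 0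
        ≤ selF p k x cl d Γ u v := by
    intro c' hc' α' β' hβ'
    have h1 := selF_ub (p := p) (k := k) (x := x) hd hc' α' (α' + β')
    have hsimp : α' + β' - α' = β' := by ring
    rw [hsimp] at h1
    exact le_trans h1 (hmax α' (α' + β') (by linarith))
  have hgc : g c u (v - u) = selF p k x cl d Γ u v := hceq
  have hval : g c u (v - u) = incVal n (selPhiK n p k x) c := by
    apply le_antisymm
    · -- weak duality
      rw [incVal_eq hk hx]
      refine Finset.le_inf' _ _ fun R hR => ?_
      exact weak_dual hx hk c u (v - u) (by linarith) hR
    · -- strong duality + maximality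
      obtain ⟨α0, β0, hβ0, h0⟩ := strong_dual hk1 hkp hx c
      refine le_trans h0 ?_
      rw [hgc]
      exact hgub c hc α0 β0 hβ0
  refine ⟨c, hc, u, v - u, by linarith, ?_, ⟨⟨c, hc, hval⟩, ?_⟩, ?_⟩
  · intro c' hc' α' β' hβ'
    have := hgub c' hc' α' β' hβ'
    rw [← hgc] at this
    exact this
  · rintro val ⟨c', hc', rfl⟩
    obtain ⟨α0, β0, hβ0, h0⟩ := strong_dual hk1 hkp hx c'
    refine le_trans h0 ?_
    rw [← hgc] at hgub
    exact hgub c' hc' α0 β0 hβ0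
  · rcases hstruct with h | h | h
    · exact Or.inl (by rw [h]; ring)
    · obtain ⟨i, hi⟩ := h
      rcases hi with hi | hi
      · exact Or.inr (Or.inl (Or.inl ⟨i, hi⟩))
      · exact Or.inr (Or.inl (Or.inr ⟨i, hi⟩))
    · obtain ⟨i, hi⟩ := h
      have hv : u + (v - u) = v := by ring
      rcases hi with hi | hi
      · exact Or.inr (Or.inr (Or.inl ⟨i, by rw [hv]; exact hi⟩))
      · exact Or.inr (Or.inr (Or.inr ⟨i, by rw [hv]; exact hi⟩))
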